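/- Let M ≥ 1, T ≥ 1, C ≥ 0. For each m ∈ {1,…,M}, let Γ_m ∈ [0,1], Q_m(0) ≥ 0, indicators 𝟙_m^t ∈ {0,1}, and queue updates Q_m(t+1) = max{Q_m(t) − 𝟙_m^t + Γ_m, 0}. Let Ξ(t) = (1/2) Σ_{m=1}^M Q_m(t)², and suppose Ξ(t+1) − Ξ(t) ≤ C for every 0 ≤ t ≤ T−1. Then for every m, (1/T) Σ_{t=0}^{T−1} 𝟙_m^t ≥ Γ_m − √( 2C/T + Σ_{m'=1}^M Q_{m'}(0)² / T² ). (This is the deterministic core of inequality (39) of Theorem 2 in the paper, with C = H + V(φ^opt − τ^min): it bounds the shortfall of each gateway's empirical participation rate from its target rate.) -/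

import Mathlib

open Finset

/-- Deterministic core of inequality (39) of Theorem 2: shortfall of the empirical
participation rate of each gateway from its target rate. -/
theorem participation_rate_shortfall_bound
    (M T : ℕ) (hM : 1 ≤ M) (hT : 1 ≤ T)
    (C : ℝ) (hC : 0 ≤ C)
    (Γ : Fin M → ℝ) (hΓ : ∀ m, Γ m ∈ Set.Icc (0 : ℝ) 1)
    (Q : Fin M → ℕ → ℝ) (hQ0 : ∀ m, 0 ≤ Q m 0)
    (ind : Fin M → ℕ → ℝ) (hind : ∀ m t, ind m t = 0 ∨ ind m t = 1)
    (hupd : ∀ m t, Q m (t + 1) = max (Q m t - ind m t + Γ m) 0)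
    (hdrift : ∀ t < T,
      (1 / 2) * (∑ m, (Q m (t + 1)) ^ 2) - (1 / 2) * (∑ m, (Q m t) ^ 2) ≤ C) :
    ∀ m, (1 / (T : ℝ)) * ∑ t ∈ Finset.range T, ind m t ≥
      Γ m - Real.sqrt (2 * C / (T : ℝ) + (∑ m', (Q m' 0) ^ 2) / (T : ℝ) ^ 2) := by
  intro m
  have hTpos : (0 : ℝ) < T := by exact_mod_cast hT
  -- nonnegativity of queues
  have hQnn : ∀ m' t, 0 ≤ Q m' t := by
    intro m' t
    cases t with
    | zero => exact hQ0 m'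
    | succ n => rw [hupd]; exact le_max_right _ _
  -- lower bound on Q m t
  have hlow : ∀ t : ℕ, (t : ℝ) * Γ m - ∑ s ∈ Finset.range t, ind m s ≤ Q m t := by
    intro t
    induction t with
    | zero => simpa using hQ0 m
    | succ n ih =>
      rw [hupd, Finset.sum_range_succ]
      refine le_trans ?_ (le_max_left _ _)
      push_cast
      linarith
  -- Lyapunov bound
  have hXi : ∀ t ≤ T, (1/2) * (∑ m', (Q m' t) ^ 2) ≤ (1/2) * (∑ m', (Q m' 0) ^ 2) + t * C := by
    intro t
    induction t with
    | zero => intro _; simp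
    | succ n ih =>
      intro h
      have h1 := ih (Nat.le_of_succ_le h)
      have h2 := hdrift n (Nat.lt_of_succ_le h)
      push_cast
      linarith
  set S := ∑ m', (Q m' 0) ^ 2 with hS
  have hSnn : 0 ≤ S := Finset.sum_nonneg fun i _ => sq_nonneg _
  have hsq : (Q m T) ^ 2 ≤ 2 * (T : ℝ) * C + S := by
    have h1 : (Q m T) ^ 2 ≤ ∑ m', (Q m' T) ^ 2 :=
      Finset.single_le_sum (f := fun i => (Q i T) ^ 2) (fun i _ => sq_nonneg _) (Finset.mem_univ m)
    have h2 := hXi T le_rfl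
    linarith
  have hQle : Q m T ≤ Real.sqrt (2 * (T : ℝ) * C + S) := by
    rw [← Real.sqrt_sq (hQnn m T)]
    exact Real.sqrt_le_sqrt hsq
  -- rewrite the sqrt
  have hsqrt_eq : Real.sqrt (2 * C / (T : ℝ) + S / (T : ℝ) ^ 2)
      = Real.sqrt (2 * (T : ℝ) * C + S) / (T : ℝ) := by
    rw [show 2 * C / (T : ℝ) + S / (T : ℝ) ^ 2 = (2 * (T : ℝ) * C + S) / (T : ℝ) ^ 2 by
      field_simp]
    rw [Real.sqrt_div (by positivity), Real.sqrt_sq hTpos.le]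
  rw [ge_iff_le, hsqrt_eq, sub_le_iff_le_add]
  have hl := hlow T
  rw [one_div, inv_mul_eq_div, ← add_div, le_div_iff₀ hTpos]
  nlinarith [hl, hQle]
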